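/- For all natural numbers n ≥ 1, j with 0 ≤ j ≤ n, and all b ≥ 0, the identity Σ_{k=0}^{n} c_b(n+b, k+b) · S_b(k+b, j+b) = (n!/j!) · binom(n+2b−1, n−j) holds, where c_b and S_b denote the b-Stirling numbers of the first and second kind respectively. -/

import Mathlib

/-- The unsigned Stirling numbers of the first kind. -/
def stirling1 : ℕ → ℕ → ℕ
  | 0, 0 => 1
  | 0, _ + 1 => 0
  | _ + 1, 0 => 0
  | n + 1, k + 1 => n * stirling1 n (k + 1) + stirling1 n k

/-- The Stirling numbers of the second kind. -/
def stirling2 : ℕ → ℕ → ℕ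
  | 0, 0 => 1
  | 0, _ + 1 => 0
  | _ + 1, 0 => 0
  | n + 1, k + 1 => (k + 1) * stirling2 n (k + 1) + stirling2 n k

/-- The `r`-Stirling number of the first kind `c_r(n+r, k+r)`, via
`c_r(n+r,k+r) = Σ_{m=0}^{n−k} binom(n,m) c(n−m,k) r^{(m)}`. -/
def rStirling1 (r n k : ℕ) : ℕ :=
  ∑ m ∈ Finset.range (n - k + 1), n.choose m * stirling1 (n - m) k * r.ascFactorial m

/-- The `r`-Stirling number of the second kind `S_r(n+r, k+r)`, via
`S_r(n+r,k+r) = Σ_{m=k}^{n} binom(n,m) S(m,k) r^{n−m}`. -/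
def rStirling2 (r n k : ℕ) : ℕ :=
  ∑ m ∈ Finset.Icc k n, n.choose m * stirling2 m k * r ^ (n - m)

lemma stirling1_eq_zero : ∀ {n k : ℕ}, n < k → stirling1 n k = 0 := by
  intro n
  induction n with
  | zero => rintro (_ | k) h; · omega
            rfl
  | succ n ih =>
      rintro (_ | k) h
      · omega
      · show n * stirling1 n (k + 1) + stirling1 n k = 0
        rw [ih (by omega), ih (by omega)]
        ring

lemma stirling2_eq_zero : ∀ {n k : ℕ}, n < k → stirling2 n k = 0 := by
  intro n
  induction n with
  | zero => rintro (_ | k) h; · omega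
            rfl
  | succ n ih =>
      rintro (_ | k) h
      · omega
      · show (k + 1) * stirling2 n (k + 1) + stirling2 n k = 0
        rw [ih (by omega), ih (by omega)]
        ring

/-- auxiliary: `rStirling1` as a sum over the full range. -/
def g1 (r n k : ℕ) : ℕ :=
  ∑ m ∈ Finset.range (n + 1), n.choose m * stirling1 (n - m) k * r.ascFactorial m

/-- auxiliary: `rStirling2` as a sum over the full range. -/
def g2 (r n k : ℕ) : ℕ :=
  ∑ m ∈ Finset.range (n + 1), n.choose m * stirling2 m k * r ^ (n - m)

lemma rStirling1_eq_g1 (r n k : ℕ) : rStirling1 r n k = g1 r n k := by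
  rw [rStirling1, g1]
  apply Finset.sum_subset
  · intro x hx
    simp only [Finset.mem_range] at *
    omega
  · intro x hx hx'
    simp only [Finset.mem_range] at *
    rw [stirling1_eq_zero (by omega)]
    ring

lemma rStirling2_eq_g2 (r n k : ℕ) : rStirling2 r n k = g2 r n k := by
  rw [rStirling2, g2]
  apply Finset.sum_subset
  · intro x hx
    simp only [Finset.mem_Icc, Finset.mem_range] at *
    omega
  · intro x hx hx'
    simp only [Finset.mem_Icc, Finset.mem_range] at *
    rw [stirling2_eq_zero (by omega)]
    ring

lemma g1_eq_zero {r n k : ℕ} (h : n < k) : g1 r n k = 0 := by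
  rw [g1]
  apply Finset.sum_eq_zero
  intro m hm
  rw [stirling1_eq_zero (by omega)]
  ring

lemma g2_eq_zero {r n k : ℕ} (h : n < k) : g2 r n k = 0 := by
  rw [g2]
  apply Finset.sum_eq_zero
  intro m hm
  simp only [Finset.mem_range] at hm
  rw [stirling2_eq_zero (by omega)]
  ring

lemma g1_zero (r n : ℕ) : g1 r n 0 = r.ascFactorial n := by
  rw [g1, Finset.sum_eq_single n]
  · simp [stirling1]
  · intro m hm hne
    simp only [Finset.mem_range] at hm
    have : n - m = (n - m - 1) + 1 := by omega
    rw [this]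
    show n.choose m * stirling1 ((n-m-1)+1) 0 * r.ascFactorial m = 0
    show n.choose m * 0 * r.ascFactorial m = 0
    ring
  · intro h
    simp at h

lemma g2_zero (r n : ℕ) : g2 r n 0 = r ^ n := by
  rw [g2, Finset.sum_eq_single 0]
  · simp [stirling2]
  · intro m hm hne
    have : m = (m - 1) + 1 := by omega
    rw [this]
    show n.choose (m-1+1) * stirling2 ((m-1)+1) 0 * r ^ (n - (m-1+1)) = 0
    show n.choose (m-1+1) * 0 * r ^ (n - (m-1+1)) = 0
    ring
  · intro h
    simp at h
lemma g2_rec (r n k : ℕ) :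
    g2 r (n+1) (k+1) = (k+1+r) * g2 r n (k+1) + g2 r n k := by
  have key : ∀ m ∈ Finset.range (n+1),
      (n+1).choose (m+1) * stirling2 (m+1) (k+1) * r ^ (n+1-(m+1))
      = (k+1) * (n.choose m * stirling2 m (k+1) * r ^ (n-m))
        + n.choose m * stirling2 m k * r ^ (n-m)
        + n.choose (m+1) * stirling2 (m+1) (k+1) * r ^ (n-m) := by
    intro m hm
    simp only [Finset.mem_range] at hm
    have h1 : (n+1).choose (m+1) = n.choose m + n.choose (m+1) := Nat.choose_succ_succ n m
    have h2 : stirling2 (m+1) (k+1) = (k+1) * stirling2 m (k+1) + stirling2 m k := rfl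
    have h3 : n + 1 - (m+1) = n - m := by omega
    rw [h3, h1, h2]; ring
  rw [g2, Finset.sum_range_succ']
  have h0 : (n+1).choose 0 * stirling2 0 (k+1) * r ^ (n+1-0) = 0 := by
    show (n+1).choose 0 * 0 * r ^ (n+1) = 0; ring
  rw [h0, add_zero, Finset.sum_congr rfl key, Finset.sum_add_distrib, Finset.sum_add_distrib]
  have hA : ∑ m ∈ Finset.range (n+1), (k+1) * (n.choose m * stirling2 m (k+1) * r ^ (n-m))
      = (k+1) * g2 r n (k+1) := by rw [g2, Finset.mul_sum]
  have hB : (∑ m ∈ Finset.range (n+1), n.choose m * stirling2 m k * r ^ (n-m)) = g2 r n k := rfl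
  have hC : (∑ m ∈ Finset.range (n+1), n.choose (m+1) * stirling2 (m+1) (k+1) * r ^ (n-m))
      = r * g2 r n (k+1) := by
    rw [Finset.sum_range_succ, Nat.choose_succ_self, g2, Finset.mul_sum,
      Finset.sum_range_succ']
    have h4 : r * ((n.choose 0) * stirling2 0 (k+1) * r ^ (n-0)) = 0 := by
      show r * ((n.choose 0) * 0 * r ^ (n-0)) = 0; ring
    rw [h4, add_zero]
    have h5 : (0:ℕ) * stirling2 (n+1) (k+1) * r ^ (n-n) = 0 := by ring
    rw [h5, add_zero]
    apply Finset.sum_congr rfl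
    intro m hm
    simp only [Finset.mem_range] at hm
    have h6 : n - m = (n - (m+1)) + 1 := by omega
    rw [h6, pow_succ]
    ring
  rw [hA, hB, hC]
  ring

lemma g1_rec (r n k : ℕ) :
    g1 r (n+1) (k+1) = (n+r) * g1 r n (k+1) + g1 r n k := by
  have hL : g1 r (n+1) (k+1)
      = stirling1 (n+1) (k+1)
        + ((∑ m ∈ Finset.range (n+1),
            n.choose m * stirling1 (n-m) (k+1) * r.ascFactorial (m+1))
          + ∑ m ∈ Finset.range (n+1),
            n.choose (m+1) * stirling1 (n-m) (k+1) * r.ascFactorial (m+1)) := by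
    rw [g1, Finset.sum_range_succ']
    have h0 : (n+1).choose 0 * stirling1 (n+1-0) (k+1) * r.ascFactorial 0
        = stirling1 (n+1) (k+1) := by simp
    rw [h0, ← Finset.sum_add_distrib, add_comm]
    congr 1
    apply Finset.sum_congr rfl
    intro m hm
    simp only [Finset.mem_range] at hm
    have h1 : (n+1).choose (m+1) = n.choose m + n.choose (m+1) := Nat.choose_succ_succ n m
    have h2 : n + 1 - (m+1) = n - m := by omega
    rw [h1, h2]; ring
  have hR : (n+r) * g1 r n (k+1) + g1 r n k
      = (∑ m ∈ Finset.range (n+1),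
          n.choose m * stirling1 ((n-m)+1) (k+1) * r.ascFactorial m)
        + ∑ m ∈ Finset.range (n+1),
          n.choose m * stirling1 (n-m) (k+1) * r.ascFactorial (m+1) := by
    rw [g1, g1, Finset.mul_sum, ← Finset.sum_add_distrib, ← Finset.sum_add_distrib]
    apply Finset.sum_congr rfl
    intro m hm
    simp only [Finset.mem_range] at hm
    have h2 : stirling1 ((n-m)+1) (k+1)
        = (n-m) * stirling1 (n-m) (k+1) + stirling1 (n-m) k := rfl
    have h3 : n + r = (n - m) + (r + m) := by omega
    have h4 : r.ascFactorial (m+1) = (r + m) * r.ascFactorial m := Nat.ascFactorial_succ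
    rw [h2, h3, h4]; ring
  have hX : stirling1 (n+1) (k+1)
        + (∑ m ∈ Finset.range (n+1),
            n.choose (m+1) * stirling1 (n-m) (k+1) * r.ascFactorial (m+1))
      = ∑ m ∈ Finset.range (n+1),
          n.choose m * stirling1 ((n-m)+1) (k+1) * r.ascFactorial m := by
    conv_rhs => rw [Finset.sum_range_succ']
    have h0 : n.choose 0 * stirling1 ((n-0)+1) (k+1) * r.ascFactorial 0
        = stirling1 (n+1) (k+1) := by simp
    rw [h0, Finset.sum_range_succ, Nat.choose_succ_self, add_comm]
    congr 1
    have hz : (0:ℕ) * stirling1 (n - n) (k+1) * r.ascFactorial (n+1) = 0 := by ring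
    rw [hz, add_zero]
    apply Finset.sum_congr rfl
    intro m hm
    simp only [Finset.mem_range] at hm
    have h5 : (n - (m+1)) + 1 = n - m := by omega
    rw [h5]
  rw [hL, hR, ← hX]
  ring
/-- The convolution `Σ_k c_b(n+b,k+b) S_b(k+b,j+b)`. -/
def T (b n j : ℕ) : ℕ := ∑ k ∈ Finset.range (n + 1), g1 b n k * g2 b k j

lemma T_eq_zero {b n j : ℕ} (h : n < j) : T b n j = 0 := by
  rw [T]
  apply Finset.sum_eq_zero
  intro k hk
  simp only [Finset.mem_range] at hk
  rw [g2_eq_zero (by omega)]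
  ring

lemma T_shift (b n j : ℕ) :
    (∑ k ∈ Finset.range (n+1), g1 b n (k+1) * g2 b (k+1) j) + g1 b n 0 * g2 b 0 j
      = T b n j := by
  rw [Finset.sum_range_succ, g1_eq_zero (show n < n+1 by omega), zero_mul, add_zero,
    T, Finset.sum_range_succ']

lemma T_rec_zero (b n : ℕ) : T b (n+1) 0 = (n + 2*b) * T b n 0 := by
  rw [T, Finset.sum_range_succ']
  have h1 : ∀ k ∈ Finset.range (n+1),
      g1 b (n+1) (k+1) * g2 b (k+1) 0
      = (n+b) * (g1 b n (k+1) * g2 b (k+1) 0) + b * (g1 b n k * g2 b k 0) := by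
    intro k hk
    rw [g1_rec, g2_zero, g2_zero, pow_succ]
    ring
  rw [Finset.sum_congr rfl h1, Finset.sum_add_distrib]
  have h4 : g1 b (n+1) 0 * g2 b 0 0 = (n+b) * (g1 b n 0 * g2 b 0 0) := by
    rw [g1_zero, g1_zero, Nat.ascFactorial_succ]
    ring
  rw [h4, ← Finset.mul_sum, ← Finset.mul_sum, ← T, ← T_shift b n 0]
  ring

lemma T_rec_succ (b n j : ℕ) :
    T b (n+1) (j+1) = (n + 2*b + j + 1) * T b n (j+1) + T b n j := by
  rw [T, Finset.sum_range_succ']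
  have h0 : g1 b (n+1) 0 * g2 b 0 (j+1) = 0 := by
    rw [g2_eq_zero (by omega)]; ring
  rw [h0, add_zero]
  have h1 : ∀ k ∈ Finset.range (n+1),
      g1 b (n+1) (k+1) * g2 b (k+1) (j+1)
      = (n+b) * (g1 b n (k+1) * g2 b (k+1) (j+1))
        + ((j+1+b) * (g1 b n k * g2 b k (j+1)) + g1 b n k * g2 b k j) := by
    intro k hk
    rw [g1_rec, g2_rec]
    ring
  rw [Finset.sum_congr rfl h1, Finset.sum_add_distrib]
  have hs : (∑ k ∈ Finset.range (n+1), g1 b n (k+1) * g2 b (k+1) (j+1))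
      = T b n (j+1) := by
    have h := T_shift b n (j+1)
    rwa [g2_eq_zero (show (0:ℕ) < j+1 by omega), mul_zero, add_zero] at h
  have h3 : (∑ k ∈ Finset.range (n+1),
        ((j+1+b) * (g1 b n k * g2 b k (j+1)) + g1 b n k * g2 b k j))
      = (j+1+b) * T b n (j+1) + T b n j := by
    rw [Finset.sum_add_distrib, ← Finset.mul_sum, ← T, ← T]
  rw [← Finset.mul_sum, hs, h3]
  ring
lemma chooseA (n b : ℕ) :
    (n + 2*b) * ((n + 2*b - 1).choose n) = (n+1) * ((n + 2*b).choose (n+1)) := by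
  rcases b with _ | B
  · rcases n with _ | m
    · simp
    · have h1 : m + 1 + 2*0 - 1 = m := by omega
      have h1' : m + 1 + 2*0 = m + 1 := by omega
      rw [h1, h1', Nat.choose_succ_self, Nat.choose_eq_zero_of_lt (by omega)]
      ring
  · have h1 : n + 2*(B+1) - 1 = n + (2*B+1) := by omega
    have h2 : n + 2*(B+1) = (n + (2*B+1)) + 1 := by omega
    rw [h1, h2]
    have h := Nat.add_one_mul_choose_eq (n + (2*B+1)) n
    rw [h, mul_comm]

lemma key (b : ℕ) : ∀ n j, j ≤ n →
    ((j.factorial : ℚ) * T b n j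
      = (n.factorial : ℚ) * ((n + 2*b - 1).choose (n - j) : ℚ)) := by
  intro n
  induction n with
  | zero =>
      intro j hj
      interval_cases j
      simp [T, Finset.sum_range_one, g1_zero, g2_zero]
  | succ n IH =>
      intro j hj
      rcases j with _ | i
      · -- j = 0
        rw [Nat.factorial_zero, T_rec_zero]
        have h0 := IH 0 (Nat.zero_le n)
        rw [Nat.factorial_zero, Nat.sub_zero] at h0
        have hA := chooseA n b
        have hA' : ((n + 2*b) * ((n + 2*b - 1).choose n) : ℚ)
            = ((n+1) : ℚ) * ((n + 2*b).choose (n+1) : ℚ) := by exact_mod_cast hA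
        have e1 : n + 1 + 2*b - 1 = n + 2*b := by omega
        have e2 : n + 1 - 0 = n + 1 := by omega
        rw [e1, e2, Nat.factorial_succ]
        push_cast
        push_cast at h0 hA'
        nlinarith [h0, hA']
      · -- j = i+1
        rcases Nat.lt_or_ge i n with hi | hi
        · -- i + 1 ≤ n
          obtain ⟨s, rfl⟩ : ∃ s, n = s + (i+1) := ⟨n - (i+1), by omega⟩
          rw [T_rec_succ]
          have c1 := IH (i+1) (by omega)
          have c0 := IH i (by omega)
          have e1 : s + (i+1) - (i+1) = s := by omega
          have e2 : s + (i+1) - i = s + 1 := by omega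
          have e3 : s + (i+1) + 2*b - 1 = s + i + 2*b := by omega
          have e4 : s + (i+1) + 1 - (i+1) = s + 1 := by omega
          have e5 : s + (i+1) + 1 + 2*b - 1 = (s + i + 2*b) + 1 := by omega
          rw [e1, e3] at c1
          rw [e2, e3] at c0
          rw [e4, e5]
          have hP : (((s + i + 2*b) + 1).choose (s+1) : ℚ)
              = ((s + i + 2*b).choose s : ℚ) + ((s + i + 2*b).choose (s+1) : ℚ) := by
            exact_mod_cast congrArg (Nat.cast (R := ℚ)) (Nat.choose_succ_succ (s + i + 2*b) s)
          have hQn : (s + i + 2*b).choose (s+1) * (s+1)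
              = (s + i + 2*b).choose s * (i + 2*b) := by
            have h := Nat.choose_succ_right_eq (s + i + 2*b) s
            have : s + i + 2*b - s = i + 2*b := by omega
            rwa [this] at h
          have hQ : ((s + i + 2*b).choose (s+1) : ℚ) * ((s:ℚ)+1)
              = ((s + i + 2*b).choose s : ℚ) * ((i:ℚ) + 2*b) := by exact_mod_cast hQn
          have hF : ((s+(i+1)+1).factorial : ℚ)
              = ((s:ℚ)+i+2) * ((s+(i+1)).factorial : ℚ) := by
            rw [Nat.factorial_succ]; push_cast; ring
          rw [Nat.factorial_succ] at c1 ⊢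
          push_cast at c1 c0 hP ⊢
          linear_combination - ((((s+i+2*b)+1).choose (s+1) : ℕ) : ℚ) * hF + ((s:ℚ)+2*i+2*b+2)*c1 + ((i:ℚ)+1)*c0
            - ((s:ℚ)+i+2)*((s+(i+1)).factorial : ℚ)*hP
            - ((s+(i+1)).factorial : ℚ)*hQ
        · -- i = n, j = n+1
          have hin : i = n := by omega
          subst hin
          rw [T_rec_succ, T_eq_zero (show i < i + 1 by omega)]
          have c0 := IH i le_rfl
          rw [Nat.sub_self, Nat.choose_zero_right] at c0
          have hne : (i.factorial : ℚ) ≠ 0 := by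
            exact_mod_cast i.factorial_ne_zero
          have hT := mul_left_cancel₀ hne c0
          push_cast at hT
          have e4 : i + 1 - (i+1) = 0 := by omega
          rw [e4, Nat.choose_zero_right]
          push_cast
          rw [hT]
          ring
theorem sum_rStirling_prod (n j b : ℕ) (hn : 1 ≤ n) (hj : j ≤ n) :
    (∑ k ∈ Finset.range (n + 1), (rStirling1 b n k * rStirling2 b k j : ℚ)) =
      (n.factorial : ℚ) / (j.factorial : ℚ) * ((n + 2 * b - 1).choose (n - j) : ℚ) := by
  have hT : (∑ k ∈ Finset.range (n + 1), (rStirling1 b n k * rStirling2 b k j : ℚ))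
      = (T b n j : ℚ) := by
    rw [T]
    push_cast
    apply Finset.sum_congr rfl
    intro k hk
    rw [rStirling1_eq_g1, rStirling2_eq_g2]
  rw [hT]
  have h := key b n j hj
  have hf : (j.factorial : ℚ) ≠ 0 := by exact_mod_cast j.factorial_ne_zero
  rw [div_mul_eq_mul_div, eq_div_iff hf]
  linear_combination h
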